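/- arXiv:2003.00267 — 2 statements merged into one kernel-verified Lean document; each statement's English description precedes it below -/
import Mathlib

section
/- For every n ≥ 1, the number of bounded affine permutations of size n satisfies |S̃//_n| = ∑_{m=0}^n binomial(n,m) · ∑_{k=0}^m binomial(m,k) · d(m,k), and also |S̃//_n| = ∑_{m=0}^n binomial(n,m) · ∑_{k=0}^m binomial(m, n−k) · (−1)^{n−m} · a(m,k), the latter as an identity of integers. -/
/-- `σ : ℤ → ℤ` is an affine permutation of size `n` (values indexed 1,…,n). -/
def IsAffinePerm (n : ℕ) (σ : ℤ → ℤ) : Prop :=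
  Function.Bijective σ ∧ (∀ i : ℤ, σ (i + n) = σ i + n) ∧
    (∑ i ∈ Finset.Icc (1 : ℤ) (n : ℤ), σ i) = ∑ i ∈ Finset.Icc (1 : ℤ) (n : ℤ), i

/-- Bounded affine permutation of size `n`. -/
def IsBoundedAffinePerm (n : ℕ) (σ : ℤ → ℤ) : Prop :=
  IsAffinePerm n σ ∧ ∀ i : ℤ, |σ i - i| < (n : ℤ)

/-- Ordinary pattern containment. -/
def PermContains {n k : ℕ} (π : Equiv.Perm (Fin n)) (τ : Equiv.Perm (Fin k)) : Prop :=
  ∃ f : Fin k → Fin n, StrictMono f ∧ ∀ s t : Fin k, τ s < τ t ↔ π (f s) < π (f t)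

/-- A function `σ : ℤ → ℤ` contains the ordinary pattern `τ`. -/
def AffContains {k : ℕ} (σ : ℤ → ℤ) (τ : Equiv.Perm (Fin k)) : Prop :=
  ∃ f : Fin k → ℤ, StrictMono f ∧ ∀ s t : Fin k, τ s < τ t ↔ σ (f s) < σ (f t)

/-- The shift `Σ^r σ`. -/
def shiftPerm (r : ℤ) (σ : ℤ → ℤ) : ℤ → ℤ := fun i => σ (i - r) + r

/-- The infinite sum `⊕π : ℤ → ℤ` of a permutation `π` of size `n ≥ 1`,
with the convention that `π` acts (1-indexed) on `{1,…,n}`. -/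
def infiniteSum {n : ℕ} (hn : 0 < n) (π : Equiv.Perm (Fin n)) : ℤ → ℤ := fun i =>
  ((π ⟨((i - 1) % (n : ℤ)).toNat, by
      have h0 : (0 : ℤ) < (n : ℤ) := by exact_mod_cast hn
      have h1 : 0 ≤ (i - 1) % (n : ℤ) := Int.emod_nonneg _ h0.ne'
      have h2 : (i - 1) % (n : ℤ) < (n : ℤ) := Int.emod_lt_of_pos _ h0
      omega⟩ : Fin n).val : ℤ) + 1 + (n : ℤ) * ((i - 1) / (n : ℤ))

/-- `aff(C)`: all shifts of infinite sums of members of `C`. -/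
def AffOfClass (C : (n : ℕ) → Set (Equiv.Perm (Fin n))) : Set (ℤ → ℤ) :=
  {σ | ∃ (m : ℕ) (hm : 0 < m) (π : Equiv.Perm (Fin m)) (r : ℤ),
      π ∈ C m ∧ σ = shiftPerm r (infiniteSum hm π)}

/-- The direct sum `σ ⊕ ρ` of two permutations. -/
def permDirectSum {a b : ℕ} (σ : Equiv.Perm (Fin a)) (ρ : Equiv.Perm (Fin b)) :
    Equiv.Perm (Fin (a + b)) :=
  finSumFinEquiv.symm.trans ((Equiv.sumCongr σ ρ).trans finSumFinEquiv)

/-- A permutation is sum-indecomposable if it is not a sum of two permutations of nonzero size. -/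
def IsSumIndecomposable {n : ℕ} (π : Equiv.Perm (Fin n)) : Prop :=
  ¬ ∃ (a b : ℕ) (_ : 0 < a) (_ : 0 < b) (h : a + b = n)
      (σ : Equiv.Perm (Fin a)) (ρ : Equiv.Perm (Fin b)),
      π = (finCongr h).permCongr (permDirectSum σ ρ)

/-- `π` maps the first `d` positions onto the first `d` values. -/
def IsPrefixInvariant {n : ℕ} (π : Equiv.Perm (Fin n)) (d : ℕ) : Prop :=
  ∀ i : Fin n, ((π i : ℕ) < d ↔ (i : ℕ) < d)

/-- `a(π)`: the size of the first sum-indecomposable block of `π`. -/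
noncomputable def firstBlockSize {n : ℕ} (π : Equiv.Perm (Fin n)) : ℕ :=
  sInf {d : ℕ | 1 ≤ d ∧ d ≤ n ∧ IsPrefixInvariant π d}

/-- `χ(π)`: the number of sum-indecomposable blocks of `π`. -/
noncomputable def numBlocks {n : ℕ} (π : Equiv.Perm (Fin n)) : ℕ :=
  Set.ncard {d : ℕ | 1 ≤ d ∧ d ≤ n ∧ IsPrefixInvariant π d}

/-- `C` is a permutation class: it is closed under pattern containment. -/
def IsPermClass (C : (n : ℕ) → Set (Equiv.Perm (Fin n))) : Prop :=
  ∀ (n k : ℕ) (π : Equiv.Perm (Fin n)) (τ : Equiv.Perm (Fin k)),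
    π ∈ C n → PermContains π τ → τ ∈ C k

/-- `C` is sum closed. -/
def IsSumClosed (C : (n : ℕ) → Set (Equiv.Perm (Fin n))) : Prop :=
  ∀ (a b : ℕ) (σ : Equiv.Perm (Fin a)) (ρ : Equiv.Perm (Fin b)),
    σ ∈ C a → ρ ∈ C b → permDirectSum σ ρ ∈ C (a + b)

/-- The infinite increasing oscillation `𝒪`. -/
def oscillO : ℤ → ℤ := fun i => if Odd i then i + 2 else i - 2

/-- An affine permutation is decomposable if it is a shift of an infinite sum. -/
def IsDecomposableAffine (ω : ℤ → ℤ) : Prop :=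
  ∃ (r : ℤ) (m : ℕ) (hm : 0 < m) (π : Equiv.Perm (Fin m)),
    ω = shiftPerm r (infiniteSum hm π)

/-- Containment of one `ℤ → ℤ` permutation in another. -/
def ContainsAffine (ω ω' : ℤ → ℤ) : Prop :=
  ∃ φ φ' : ℤ → ℤ, StrictMono φ ∧ StrictMono φ' ∧ ∀ i : ℤ, ω (φ i) = φ' (ω' i)

/-- The inversion graph of a function `ℤ → ℤ`. -/
def invGraph (ω : ℤ → ℤ) : SimpleGraph ℤ where
  Adj i j := (i < j ∧ ω j < ω i) ∨ (j < i ∧ ω i < ω j)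
  symm := ⟨fun _ _ h => Or.symm h⟩
  loopless := ⟨by rintro i (⟨h, -⟩ | ⟨h, -⟩) <;> exact lt_irrefl i h⟩

/-- Number of excedances of a permutation (1-indexed: positions `i` with `π(i) > i`). -/
def excCount {n : ℕ} (π : Equiv.Perm (Fin n)) : ℕ :=
  (Finset.univ.filter fun i => i < π i).card

/-- Number of fixed points of a permutation. -/
def numFixedPoints {n : ℕ} (π : Equiv.Perm (Fin n)) : ℕ :=
  (Finset.univ.filter fun i => π i = i).card

/-- Eulerian number `a(n,k)`: permutations of size `n` with `k` excedances. -/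
noncomputable def eulerianA (n k : ℕ) : ℕ := Nat.card {π : Equiv.Perm (Fin n) // excCount π = k}

/-- Derangement Eulerian number `d(n,k)`. -/
noncomputable def derangD (n k : ℕ) : ℕ :=
  Nat.card {π : Equiv.Perm (Fin n) // (∀ i, π i ≠ i) ∧ excCount π = k}


namespace S17

open Finset Equiv

variable {n : ℕ}

/-- residue index of `i` (1-indexed) -/
def idx (hn : 0 < n) (i : ℤ) : Fin n :=
  ⟨((i - 1) % (n : ℤ)).toNat, by
    have h0 : (0 : ℤ) < (n : ℤ) := by exact_mod_cast hn
    have h1 : 0 ≤ (i - 1) % (n : ℤ) := Int.emod_nonneg _ h0.ne'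
    have h2 : (i - 1) % (n : ℤ) < (n : ℤ) := Int.emod_lt_of_pos _ h0
    omega⟩

lemma idx_coe (hn : 0 < n) (i : ℤ) : ((idx hn i : ℕ) : ℤ) = (i - 1) % (n : ℤ) := by
  have h0 : (0 : ℤ) < (n : ℤ) := by exact_mod_cast hn
  simp only [idx]
  exact Int.toNat_of_nonneg (Int.emod_nonneg _ h0.ne')

lemma idx_spec (hn : 0 < n) (q : ℤ) (r : Fin n) :
    idx hn (1 + n * q + r) = r ∧ (1 + n * q + (r : ℤ) - 1) / n = q := by
  have h0 : (0 : ℤ) < (n : ℤ) := by exact_mod_cast hn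
  have hr0 : (0 : ℤ) ≤ (r : ℤ) := by exact_mod_cast Nat.zero_le _
  have hrn : ((r : ℕ) : ℤ) < (n : ℤ) := by exact_mod_cast r.2
  have he : (1 + (n : ℤ) * q + (r : ℤ) - 1) = (n : ℤ) * q + (r : ℤ) := by ring
  constructor
  · apply Fin.ext
    have : ((idx hn (1 + n * q + r) : ℕ) : ℤ) = (r : ℤ) := by
      rw [idx_coe, he, add_comm ((n:ℤ)*q), Int.add_mul_emod_self_left,
        Int.emod_eq_of_lt hr0 hrn]
    exact_mod_cast this
  · rw [he, add_comm ((n:ℤ)*q), Int.add_mul_ediv_left _ _ (by exact_mod_cast hn.ne' : (n:ℤ) ≠ 0),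
      Int.ediv_eq_zero_of_lt hr0 hrn, zero_add]


lemma idx_fin (hn : 0 < n) (r : Fin n) : idx hn ((r : ℤ) + 1) = r := by
  have := (idx_spec hn 0 r).1
  simpa [add_comm] using this

lemma decomp (hn : 0 < n) (i : ℤ) : i = 1 + n * ((i - 1) / n) + (idx hn i : ℤ) := by
  have h0 : (0 : ℤ) < (n : ℤ) := by exact_mod_cast hn
  have := Int.mul_ediv_add_emod (i - 1) n
  rw [idx_coe]
  omega

lemma idx_eq_of (hn : 0 < n) (i : ℤ) {q : ℤ} {r : Fin n} (h : i = 1 + n * q + r) :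
    idx hn i = r ∧ (i - 1) / n = q := by
  subst h; exact idx_spec hn q r

/-- the map from window data to an affine function -/
def build (hn : 0 < n) (w : Perm (Fin n)) (t : Fin n → ℤ) : ℤ → ℤ :=
  fun i => ((w (idx hn i) : ℕ) : ℤ) + 1 + n * ((i - 1) / n) + n * t (idx hn i)

lemma build_val (hn : 0 < n) (w : Perm (Fin n)) (t : Fin n → ℤ) {i q : ℤ} {r : Fin n}
    (h : i = 1 + n * q + r) :
    build hn w t i = ((w r : ℕ) : ℤ) + 1 + n * q + n * t r := by
  obtain ⟨h1, h2⟩ := idx_eq_of hn i h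
  simp [build, h1, h2]

lemma build_decomp (hn : 0 < n) (w : Perm (Fin n)) (t : Fin n → ℤ) (i : ℤ) :
    build hn w t i = 1 + n * ((i - 1) / n + t (idx hn i)) + ((w (idx hn i) : ℕ) : ℤ) := by
  simp only [build]; ring

lemma build_idx (hn : 0 < n) (w : Perm (Fin n)) (t : Fin n → ℤ) (i : ℤ) :
    idx hn (build hn w t i) = w (idx hn i) ∧
      (build hn w t i - 1) / n = (i - 1) / n + t (idx hn i) :=
  idx_eq_of hn _ (build_decomp hn w t i)

lemma build_injective (hn : 0 < n) (w : Perm (Fin n)) (t : Fin n → ℤ) :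
    Function.Injective (build hn w t) := by
  intro i j hij
  have hi := build_idx hn w t i
  have hj := build_idx hn w t j
  have hr : idx hn i = idx hn j := w.injective (by rw [← hi.1, ← hj.1, hij])
  have hq : (i - 1) / n = (j - 1) / n := by
    have := hi.2.symm.trans (hij ▸ hj.2)
    rw [hr] at this; omega
  have d1 := decomp hn i
  have d2 := decomp hn j
  rw [hr, hq] at d1
  omega

lemma build_surjective (hn : 0 < n) (w : Perm (Fin n)) (t : Fin n → ℤ) :
    Function.Surjective (build hn w t) := by
  intro y
  set s : Fin n := w.symm (idx hn y) with hs
  refine ⟨1 + n * ((y - 1) / n - t s) + s, ?_⟩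
  rw [build_val hn w t rfl, hs, Equiv.apply_symm_apply, mul_sub]
  have := decomp hn y
  omega

lemma build_periodic (hn : 0 < n) (w : Perm (Fin n)) (t : Fin n → ℤ) (i : ℤ) :
    build hn w t (i + n) = build hn w t i + n := by
  have h : i + (n : ℤ) = 1 + n * ((i - 1) / n + 1) + (idx hn i : ℤ) := by
    have := decomp hn i; rw [mul_add, mul_one]; omega
  rw [build_val hn w t h, build_decomp hn w t i]
  ring

lemma Icc_eq (hn : 0 < n) :
    Finset.Icc (1 : ℤ) (n : ℤ) = Finset.univ.map
      ⟨fun r : Fin n => (r : ℤ) + 1, by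
        intro a b h
        simp only at h
        exact Fin.ext (by omega)⟩ := by
  ext a
  simp only [Finset.mem_Icc, Finset.mem_map, Finset.mem_univ, true_and,
    Function.Embedding.coeFn_mk]
  constructor
  · rintro ⟨h1, h2⟩
    refine ⟨⟨(a - 1).toNat, by omega⟩, ?_⟩
    show ((a - 1).toNat : ℤ) + 1 = a
    omega
  · rintro ⟨r, rfl⟩
    have := r.2
    change 1 ≤ ((r : ℕ) : ℤ) + 1 ∧ ((r : ℕ) : ℤ) + 1 ≤ (n : ℤ)
    omega

lemma sum_Icc_eq (hn : 0 < n) (f : ℤ → ℤ) :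
    ∑ i ∈ Finset.Icc (1 : ℤ) (n : ℤ), f i = ∑ r : Fin n, f ((r : ℤ) + 1) := by
  rw [Icc_eq hn, Finset.sum_map]
  rfl

lemma build_sum (hn : 0 < n) (w : Perm (Fin n)) (t : Fin n → ℤ) :
    ∑ i ∈ Finset.Icc (1 : ℤ) (n : ℤ), build hn w t i =
      (∑ i ∈ Finset.Icc (1 : ℤ) (n : ℤ), i) + n * ∑ r : Fin n, t r := by
  rw [sum_Icc_eq hn, sum_Icc_eq hn (fun i => i)]
  have h1 : ∀ r : Fin n, build hn w t ((r : ℤ) + 1)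
      = (((w r : ℕ) : ℤ) + 1) + n * t r := by
    intro r
    rw [build_val hn w t (by push_cast; ring : ((r:ℤ)+1) = 1 + (n:ℤ) * 0 + r)]
    ring
  simp only [h1, Finset.sum_add_distrib, ← Finset.mul_sum]
  have h2 : ∑ r : Fin n, ((w r : ℕ) : ℤ) = ∑ r : Fin n, ((r : ℕ) : ℤ) :=
    Equiv.sum_comp w (fun r => ((r : ℕ) : ℤ))
  rw [h2]


/-- allowed shift patterns -/
def Cond (w : Perm (Fin n)) (t : Fin n → ℤ) : Prop :=
  (∀ r : Fin n, t r = 0 ∨ (t r = -1 ∧ r < w r) ∨ (t r = 1 ∧ w r < r)) ∧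
    (∑ r : Fin n, t r) = 0

lemma small_mul (hn : 0 < n) {d : ℤ} (h : |(n : ℤ) * d| < n) : d = 0 := by
  have h0 : (0 : ℤ) < (n : ℤ) := by exact_mod_cast hn
  rw [abs_mul, abs_of_nonneg h0.le] at h
  have : (n : ℤ) * |d| < (n : ℤ) * 1 := by omega
  have hd : |d| < 1 := lt_of_mul_lt_mul_left this h0.le
  have := abs_nonneg d
  have h2 := abs_lt.mp hd
  omega

lemma build_sub_self (hn : 0 < n) (w : Perm (Fin n)) (t : Fin n → ℤ) (i : ℤ) :
    build hn w t i - i = ((w (idx hn i) : ℕ) : ℤ) - ((idx hn i : ℕ) : ℤ) + n * t (idx hn i) := by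
  have hd := decomp hn i
  rw [build_decomp hn w t i, mul_add]
  omega

lemma bounded_of_cond (hn : 0 < n) (w : Perm (Fin n)) (t : Fin n → ℤ)
    (hc : ∀ r : Fin n, t r = 0 ∨ (t r = -1 ∧ r < w r) ∨ (t r = 1 ∧ w r < r)) (i : ℤ) :
    |build hn w t i - i| < n := by
  rw [build_sub_self hn w t i]
  set r := idx hn i
  have hw : ((w r : ℕ) : ℤ) < n := by exact_mod_cast (w r).2
  have hr : ((r : ℕ) : ℤ) < n := by exact_mod_cast r.2
  have hw0 : (0 : ℤ) ≤ ((w r : ℕ) : ℤ) := by exact_mod_cast Nat.zero_le _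
  have hr0 : (0 : ℤ) ≤ ((r : ℕ) : ℤ) := by exact_mod_cast Nat.zero_le _
  rcases hc r with h | ⟨h, hlt⟩ | ⟨h, hlt⟩
  · rw [h, mul_zero, abs_lt]; omega
  · rw [h, Fin.lt_def] at *
    have : ((r : ℕ) : ℤ) < ((w r : ℕ) : ℤ) := by exact_mod_cast hlt
    rw [abs_lt]; omega
  · rw [h, Fin.lt_def] at *
    have : ((w r : ℕ) : ℤ) < ((r : ℕ) : ℤ) := by exact_mod_cast hlt
    rw [abs_lt]; omega

lemma cond_of_bounded (hn : 0 < n) (w : Perm (Fin n)) (t : Fin n → ℤ)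
    (hb : ∀ i : ℤ, |build hn w t i - i| < n) (r : Fin n) :
    t r = 0 ∨ (t r = -1 ∧ r < w r) ∨ (t r = 1 ∧ w r < r) := by
  have h := hb ((r : ℤ) + 1)
  rw [build_sub_self hn w t, idx_fin hn r] at h
  have hw : ((w r : ℕ) : ℤ) < n := by exact_mod_cast (w r).2
  have hr : ((r : ℕ) : ℤ) < n := by exact_mod_cast r.2
  have hw0 : (0 : ℤ) ≤ ((w r : ℕ) : ℤ) := by exact_mod_cast Nat.zero_le _
  have hr0 : (0 : ℤ) ≤ ((r : ℕ) : ℤ) := by exact_mod_cast Nat.zero_le _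
  set c : ℤ := ((w r : ℕ) : ℤ) - ((r : ℕ) : ℤ) with hc
  have hcb : |c| < n := by rw [abs_lt]; omega
  have habs : |(n : ℤ) * t r| < 2 * n := by
    have h1 := abs_lt.mp h
    have h2 := abs_lt.mp hcb
    rw [abs_lt]; omega
  have h0 : (0 : ℤ) < (n : ℤ) := by exact_mod_cast hn
  have ht2 : |t r| < 2 := by
    rw [abs_mul, abs_of_nonneg h0.le] at habs
    have : (n : ℤ) * |t r| < (n : ℤ) * 2 := by omega
    exact lt_of_mul_lt_mul_left this h0.le
  have ht2' := abs_lt.mp ht2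
  have h1 := abs_lt.mp h
  have htri : t r = -1 ∨ t r = 0 ∨ t r = 1 := by omega
  rcases htri with ht | ht | ht
  · right; left
    refine ⟨ht, ?_⟩
    rw [ht, mul_neg_one] at h1
    rw [Fin.lt_def]
    omega
  · left; exact ht
  · right; right
    refine ⟨ht, ?_⟩
    rw [ht, mul_one] at h1
    rw [Fin.lt_def]
    omega

lemma build_IBAP (hn : 0 < n) (w : Perm (Fin n)) (t : Fin n → ℤ) (hc : Cond w t) :
    IsBoundedAffinePerm n (build hn w t) := by
  refine ⟨⟨⟨build_injective hn w t, build_surjective hn w t⟩, build_periodic hn w t, ?_⟩,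
    bounded_of_cond hn w t hc.1⟩
  rw [build_sum hn w t, hc.2, mul_zero, add_zero]

lemma per_mul {σ : ℤ → ℤ} (hp : ∀ i : ℤ, σ (i + n) = σ i + n) (i q : ℤ) :
    σ (i + n * q) = σ i + n * q := by
  induction q using Int.induction_on with
  | zero => simp
  | succ k ih =>
    have : i + (n : ℤ) * (k + 1) = (i + n * k) + n := by ring
    rw [this, hp, ih]; ring
  | pred k ih =>
    have h1 : (i + (n : ℤ) * (-k - 1)) + n = i + n * (-k) := by ring
    have := hp (i + (n : ℤ) * (-k - 1))
    rw [h1, ih] at this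
    omega

/-- recovered window permutation as a raw function -/
def recF (hn : 0 < n) (σ : ℤ → ℤ) : Fin n → Fin n := fun r => idx hn (σ ((r : ℤ) + 1))

lemma recF_inj (hn : 0 < n) (σ : ℤ → ℤ) (hσ : IsAffinePerm n σ) :
    Function.Injective (recF hn σ) := by
  intro a b hab
  have da := decomp hn (σ ((a : ℤ) + 1))
  have db := decomp hn (σ ((b : ℤ) + 1))
  have hri : ((idx hn (σ ((a : ℤ) + 1)) : ℕ) : ℤ) = ((idx hn (σ ((b : ℤ) + 1)) : ℕ) : ℤ) := by
    have h : idx hn (σ ((a : ℤ) + 1)) = idx hn (σ ((b : ℤ) + 1)) := hab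
    rw [h]
  set d : ℤ := (σ ((a : ℤ) + 1) - 1) / n - (σ ((b : ℤ) + 1) - 1) / n with hd0
  have key : σ ((a : ℤ) + 1) = σ ((b : ℤ) + 1) + n * d := by rw [hd0, mul_sub]; omega
  rw [← per_mul hσ.2.1 ((b : ℤ) + 1) d] at key
  have heq := hσ.1.1 key
  have hd : (a : ℤ) - b = (n : ℤ) * d := by omega
  have ha : ((a : ℕ) : ℤ) < n := by exact_mod_cast a.2
  have hb : ((b : ℕ) : ℤ) < n := by exact_mod_cast b.2
  have ha0 : (0 : ℤ) ≤ ((a : ℕ) : ℤ) := by exact_mod_cast Nat.zero_le _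
  have hb0 : (0 : ℤ) ≤ ((b : ℕ) : ℤ) := by exact_mod_cast Nat.zero_le _
  have hz : d = 0 := small_mul hn (by rw [← hd, abs_lt]; omega)
  rw [hz, mul_zero] at hd
  exact Fin.ext (by omega)

/-- recovered window permutation -/
noncomputable def recW (hn : 0 < n) (σ : ℤ → ℤ) (hσ : IsAffinePerm n σ) : Perm (Fin n) :=
  Equiv.ofBijective (recF hn σ)
    ((Finite.injective_iff_bijective).mp (recF_inj hn σ hσ))

/-- recovered shift vector -/
def recT (hn : 0 < n) (σ : ℤ → ℤ) : Fin n → ℤ := fun r => (σ ((r : ℤ) + 1) - 1) / n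

lemma build_rec (hn : 0 < n) (σ : ℤ → ℤ) (hσ : IsAffinePerm n σ) :
    build hn (recW hn σ hσ) (recT hn σ) = σ := by
  funext i
  have hi : i = 1 + (n : ℤ) * ((i - 1) / n) + ((idx hn i : ℕ) : ℤ) := decomp hn i
  rw [build_val hn _ _ hi]
  have h2 : σ i = σ (((idx hn i : ℕ) : ℤ) + 1) + n * ((i - 1) / n) := by
    conv_lhs => rw [show i = (((idx hn i : ℕ) : ℤ) + 1) + (n : ℤ) * ((i - 1) / n) by omega]
    exact per_mul hσ.2.1 _ _
  have h3 : (((recW hn σ hσ) (idx hn i) : ℕ) : ℤ)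
      = ((idx hn (σ (((idx hn i : ℕ) : ℤ) + 1)) : ℕ) : ℤ) := rfl
  have h4 := decomp hn (σ (((idx hn i : ℕ) : ℤ) + 1))
  have h5 : recT hn σ (idx hn i) = (σ (((idx hn i : ℕ) : ℤ) + 1) - 1) / n := rfl
  rw [h3, h5]
  omega

lemma cond_rec (hn : 0 < n) (σ : ℤ → ℤ) (hσ : IsBoundedAffinePerm n σ) :
    Cond (recW hn σ hσ.1) (recT hn σ) := by
  have hb := build_rec hn σ hσ.1
  constructor
  · exact cond_of_bounded hn _ _ (fun i => by rw [hb]; exact hσ.2 i)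
  · have hs := build_sum hn (recW hn σ hσ.1) (recT hn σ)
    rw [hb, hσ.1.2.2] at hs
    have h0 : (0 : ℤ) < (n : ℤ) := by exact_mod_cast hn
    have : (n : ℤ) * ∑ r : Fin n, recT hn σ r = 0 := by omega
    exact (mul_eq_zero.mp this).resolve_left h0.ne'

lemma rdiv_zero (hn : 0 < n) (r : Fin n) : ((r : ℤ) + 1 - 1) / (n : ℤ) = 0 := by
  have := (idx_spec hn 0 r).2
  rw [mul_zero] at this
  have he : (1 : ℤ) + 0 + (r : ℤ) - 1 = (r : ℤ) + 1 - 1 := by ring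
  rwa [he] at this

lemma recW_build (hn : 0 < n) (w : Perm (Fin n)) (t : Fin n → ℤ) (hc : Cond w t)
    (hσ : IsAffinePerm n (build hn w t)) : recW hn (build hn w t) hσ = w := by
  apply Equiv.ext
  intro r
  have h1 : recW hn (build hn w t) hσ r = recF hn (build hn w t) r := rfl
  rw [h1]
  unfold recF
  rw [(build_idx hn w t ((r : ℤ) + 1)).1, idx_fin hn r]

lemma recT_build (hn : 0 < n) (w : Perm (Fin n)) (t : Fin n → ℤ) :
    recT hn (build hn w t) = t := by
  funext r
  have h2 := (build_idx hn w t ((r : ℤ) + 1)).2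
  rw [idx_fin hn r, rdiv_zero hn r, zero_add] at h2
  exact h2

/-- The master equivalence -/
noncomputable def E1 (hn : 0 < n) :
    {σ : ℤ → ℤ // IsBoundedAffinePerm n σ} ≃
      {p : Perm (Fin n) × (Fin n → ℤ) // Cond p.1 p.2} where
  toFun x := ⟨(recW hn x.1 x.2.1, recT hn x.1), cond_rec hn x.1 x.2⟩
  invFun p := ⟨build hn p.1.1 p.1.2, build_IBAP hn p.1.1 p.1.2 p.2⟩
  left_inv x := Subtype.ext (build_rec hn x.1 x.2.1)
  right_inv p := by
    apply Subtype.ext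
    apply Prod.ext
    · exact recW_build hn p.1.1 p.1.2 p.2 (build_IBAP hn p.1.1 p.1.2 p.2).1
    · exact recT_build hn p.1.1 p.1.2


/-! ### Stage 2: counting shift vectors -/

def excF (w : Perm (Fin n)) : Finset (Fin n) := Finset.univ.filter fun r => r < w r
def aexF (w : Perm (Fin n)) : Finset (Fin n) := Finset.univ.filter fun r => w r < r
def nfxF (w : Perm (Fin n)) : Finset (Fin n) := Finset.univ.filter fun r => w r ≠ r

lemma excF_card (w : Perm (Fin n)) : (excF w).card = excCount w := rfl

lemma mem_excF {w : Perm (Fin n)} {r : Fin n} : r ∈ excF w ↔ r < w r := by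
  simp [excF]
lemma mem_aexF {w : Perm (Fin n)} {r : Fin n} : r ∈ aexF w ↔ w r < r := by
  simp [aexF]
lemma mem_nfxF {w : Perm (Fin n)} {r : Fin n} : r ∈ nfxF w ↔ w r ≠ r := by
  simp [nfxF]

lemma exc_disj_aex (w : Perm (Fin n)) : Disjoint (excF w) (aexF w) := by
  rw [Finset.disjoint_left]
  intro r h1 h2
  rw [mem_excF] at h1; rw [mem_aexF] at h2
  exact absurd h1 (lt_asymm h2)

lemma nfx_eq_union (w : Perm (Fin n)) : nfxF w = excF w ∪ aexF w := by
  ext r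
  rw [mem_nfxF, Finset.mem_union, mem_excF, mem_aexF]
  constructor
  · intro h; rcases lt_or_gt_of_ne h with h' | h'
    · right; exact h'
    · left; exact h'
  · rintro (h | h)
    · exact ne_of_gt h
    · exact ne_of_lt h

lemma nfx_card (w : Perm (Fin n)) : (nfxF w).card = excCount w + (aexF w).card := by
  rw [nfx_eq_union, Finset.card_union_of_disjoint (exc_disj_aex w), excF_card]

/-- shift vector from a subset -/
def tOf (w : Perm (Fin n)) (U : Finset (Fin n)) : Fin n → ℤ := fun r =>
  if r ∈ excF w ∧ r ∈ U then -1 else if r ∈ aexF w ∧ r ∉ U then 1 else 0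

lemma sum_indicator (s : Finset (Fin n)) :
    ∑ r : Fin n, (if r ∈ s then (1 : ℤ) else 0) = s.card := by
  rw [Finset.sum_boole]
  congr 1
  exact_mod_cast congrArg Finset.card (Finset.filter_univ_mem s)


def UOf (w : Perm (Fin n)) (t : Fin n → ℤ) : Finset (Fin n) :=
  ((excF w).filter fun r => t r = -1) ∪ ((aexF w).filter fun r => t r = 0)

lemma sum_pm (t : Fin n → ℤ) (h : ∀ r : Fin n, t r = -1 ∨ t r = 0 ∨ t r = 1) :
    ∑ r : Fin n, t r =
      ((Finset.univ.filter fun r => t r = 1).card : ℤ)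
        - ((Finset.univ.filter fun r => t r = -1).card : ℤ) := by
  have hp : ∀ r : Fin n, t r = (if t r = 1 then (1 : ℤ) else 0) - (if t r = -1 then 1 else 0) := by
    intro r; rcases h r with h' | h' | h' <;> rw [h'] <;> norm_num
  rw [Finset.sum_congr rfl fun r _ => hp r, Finset.sum_sub_distrib,
    Finset.sum_boole, Finset.sum_boole]

lemma tvals {w : Perm (Fin n)} {t : Fin n → ℤ}
    (hc : ∀ r : Fin n, t r = 0 ∨ (t r = -1 ∧ r < w r) ∨ (t r = 1 ∧ w r < r)) (r : Fin n) :
    t r = -1 ∨ t r = 0 ∨ t r = 1 := by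
  rcases hc r with h | ⟨h, _⟩ | ⟨h, _⟩ <;> simp [h]

lemma filter_neg_one {w : Perm (Fin n)} {t : Fin n → ℤ}
    (hc : ∀ r : Fin n, t r = 0 ∨ (t r = -1 ∧ r < w r) ∨ (t r = 1 ∧ w r < r)) :
    Finset.univ.filter (fun r => t r = -1) = (excF w).filter fun r => t r = -1 := by
  ext r
  simp only [Finset.mem_filter, Finset.mem_univ, true_and, mem_excF, and_comm]
  constructor
  · intro h
    rcases hc r with h' | ⟨h', hlt⟩ | ⟨h', _⟩
    · rw [h] at h'; norm_num at h'
    · exact ⟨h, hlt⟩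
    · rw [h] at h'; norm_num at h'
  · exact fun h => h.1

lemma filter_one {w : Perm (Fin n)} {t : Fin n → ℤ}
    (hc : ∀ r : Fin n, t r = 0 ∨ (t r = -1 ∧ r < w r) ∨ (t r = 1 ∧ w r < r)) :
    Finset.univ.filter (fun r => t r = 1) = (aexF w).filter fun r => ¬ t r = 0 := by
  ext r
  simp only [Finset.mem_filter, Finset.mem_univ, true_and, mem_aexF]
  constructor
  · intro h
    rcases hc r with h' | ⟨h', _⟩ | ⟨h', hlt⟩
    · rw [h] at h'; norm_num at h'
    · rw [h] at h'; norm_num at h'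
    · exact ⟨hlt, by rw [h]; norm_num⟩
  · rintro ⟨hlt, h0⟩
    rcases hc r with h' | ⟨h', hlt'⟩ | ⟨h', _⟩
    · exact absurd h' h0
    · exact absurd hlt' (lt_asymm hlt)
    · exact h'

lemma UOf_mem_powersetCard (w : Perm (Fin n)) (t : Fin n → ℤ) (hc : Cond w t) :
    UOf w t ∈ Finset.powersetCard (aexF w).card (nfxF w) := by
  rw [Finset.mem_powersetCard]
  constructor
  · apply Finset.union_subset
    · exact (Finset.filter_subset _ _).trans (by rw [nfx_eq_union]; exact Finset.subset_union_left)
    · exact (Finset.filter_subset _ _).trans (by rw [nfx_eq_union]; exact Finset.subset_union_right)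
  · have hdisj : Disjoint ((excF w).filter fun r => t r = -1)
        ((aexF w).filter fun r => t r = 0) :=
      Finset.disjoint_filter_filter (exc_disj_aex w)
    rw [UOf, Finset.card_union_of_disjoint hdisj]
    have hsum := sum_pm t (tvals hc.1)
    rw [hc.2] at hsum
    have hcc : ((excF w).filter fun r => t r = -1).card
        = ((aexF w).filter fun r => ¬ t r = 0).card := by
      rw [← filter_neg_one hc.1, ← filter_one hc.1]
      omega
    have hpart := Finset.card_filter_add_card_filter_not
      (s := aexF w) (p := fun r => t r = 0)
    omega

lemma cond_tOf (w : Perm (Fin n)) (U : Finset (Fin n))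
    (hU : U ∈ Finset.powersetCard (aexF w).card (nfxF w)) : Cond w (tOf w U) := by
  rw [Finset.mem_powersetCard] at hU
  constructor
  · intro r
    by_cases h1 : r ∈ excF w ∧ r ∈ U
    · right; left
      exact ⟨by simp [tOf, h1], mem_excF.mp h1.1⟩
    · by_cases h2 : r ∈ aexF w ∧ r ∉ U
      · right; right
        exact ⟨by simp [tOf, h1, h2], mem_aexF.mp h2.1⟩
      · left; simp [tOf, h1, h2]
  · have hvals : ∀ r : Fin n, tOf w U r = -1 ∨ tOf w U r = 0 ∨ tOf w U r = 1 := by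
      intro r; unfold tOf; split_ifs <;> simp
    rw [sum_pm _ hvals]
    have h1 : Finset.univ.filter (fun r => tOf w U r = 1) = aexF w \ U := by
      ext r
      rw [Finset.mem_filter]
      simp only [Finset.mem_filter, Finset.mem_univ, true_and, Finset.mem_sdiff, tOf]
      split_ifs with ha hb
      · exact iff_of_false (by norm_num)
          (fun h => (Finset.disjoint_left.mp (exc_disj_aex w) ha.1) h.1)
      · exact iff_of_true rfl hb
      · exact iff_of_false (by norm_num) hb
    have h2 : Finset.univ.filter (fun r => tOf w U r = -1) = excF w ∩ U := by
      ext r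
      rw [Finset.mem_filter]
      simp only [Finset.mem_filter, Finset.mem_univ, true_and, Finset.mem_inter, tOf]
      split_ifs with ha hb
      · exact iff_of_true rfl ha
      · exact iff_of_false (by norm_num) (fun h => ha h)
      · exact iff_of_false (by norm_num) (fun h => ha h)
    rw [h1, h2]
    have hd1 : (aexF w \ U).card + (aexF w ∩ U).card = (aexF w).card :=
      Finset.card_sdiff_add_card_inter _ _
    have hUsplit : (U ∩ excF w).card + (U ∩ aexF w).card = U.card := by
      rw [← Finset.card_union_of_disjoint
        (Finset.disjoint_of_subset_left Finset.inter_subset_right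
          (Finset.disjoint_of_subset_right Finset.inter_subset_right (exc_disj_aex w)))]
      rw [← Finset.inter_union_distrib_left, ← nfx_eq_union,
        Finset.inter_eq_left.mpr hU.1]
    have he : (excF w ∩ U).card = (U ∩ excF w).card := by rw [Finset.inter_comm]
    have ha : (aexF w ∩ U).card = (U ∩ aexF w).card := by rw [Finset.inter_comm]
    have hc := hU.2
    omega

noncomputable def E2 (w : Perm (Fin n)) :
    {t : Fin n → ℤ // Cond w t} ≃
      {U : Finset (Fin n) // U ∈ Finset.powersetCard (aexF w).card (nfxF w)} where
  toFun t := ⟨UOf w t.1, UOf_mem_powersetCard w t.1 t.2⟩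
  invFun U := ⟨tOf w U.1, cond_tOf w U.1 U.2⟩
  left_inv t := by
    apply Subtype.ext
    funext r
    rcases t.2.1 r with ht | ⟨ht, hlt⟩ | ⟨ht, hlt⟩
    · have h1 : ¬(r ∈ excF w ∧ r ∈ UOf w t.1) := by
        rintro ⟨he, hu⟩
        rcases Finset.mem_union.mp hu with h' | h'
        · rw [(Finset.mem_filter.mp h').2] at ht; norm_num at ht
        · exact (Finset.disjoint_left.mp (exc_disj_aex w) he)
            ((Finset.filter_subset _ _) h')
      have h2 : ¬(r ∈ aexF w ∧ r ∉ UOf w t.1) := by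
        rintro ⟨ha, hu⟩
        exact hu (Finset.mem_union_right _ (Finset.mem_filter.mpr ⟨ha, ht⟩))
      simp [tOf, h1, h2, ht]
    · have he : r ∈ excF w := mem_excF.mpr hlt
      have h1 : r ∈ excF w ∧ r ∈ UOf w t.1 :=
        ⟨he, Finset.mem_union_left _ (Finset.mem_filter.mpr ⟨he, ht⟩)⟩
      simp [tOf, h1, ht]
    · have ha : r ∈ aexF w := mem_aexF.mpr hlt
      have h1 : ¬(r ∈ excF w ∧ r ∈ UOf w t.1) := by
        rintro ⟨he, _⟩
        exact (Finset.disjoint_left.mp (exc_disj_aex w) he) ha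
      have h2 : r ∈ aexF w ∧ r ∉ UOf w t.1 := by
        refine ⟨ha, fun hu => ?_⟩
        rcases Finset.mem_union.mp hu with h' | h'
        · exact (Finset.disjoint_left.mp (exc_disj_aex w)
            ((Finset.filter_subset _ _) h')) ha
        · rw [(Finset.mem_filter.mp h').2] at ht; norm_num at ht
      simp [tOf, h1, h2, ht]
  right_inv U := by
    apply Subtype.ext
    show UOf w (tOf w U.1) = U.1
    have hU := (Finset.mem_powersetCard.mp U.2).1
    ext r
    constructor
    · intro h
      rcases Finset.mem_union.mp h with h' | h'
      · obtain ⟨he, hv⟩ := Finset.mem_filter.mp h'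
        by_contra hu
        have : tOf w U.1 r = 0 := by
          have hna : r ∉ aexF w := Finset.disjoint_left.mp (exc_disj_aex w) he
          simp [tOf, hu, hna]
        rw [this] at hv; norm_num at hv
      · obtain ⟨ha, hv⟩ := Finset.mem_filter.mp h'
        by_contra hu
        have : tOf w U.1 r = 1 := by
          have hne : r ∉ excF w :=
            fun he => (Finset.disjoint_left.mp (exc_disj_aex w) he) ha
          simp [tOf, hne, ha, hu]
        rw [this] at hv; norm_num at hv
    · intro hu
      have hr : r ∈ nfxF w := hU hu
      rw [nfx_eq_union] at hr
      rcases Finset.mem_union.mp hr with he | ha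
      · refine Finset.mem_union_left _ (Finset.mem_filter.mpr ⟨he, ?_⟩)
        simp [tOf, he, hu]
      · refine Finset.mem_union_right _ (Finset.mem_filter.mpr ⟨ha, ?_⟩)
        have h1 : r ∉ excF w :=
          fun he => (Finset.disjoint_left.mp (exc_disj_aex w) he) ha
        simp [tOf, h1, hu]

lemma cardA (hn : 0 < n) :
    Nat.card {σ : ℤ → ℤ // IsBoundedAffinePerm n σ} =
      ∑ w : Perm (Fin n), ((nfxF w).card).choose (excCount w) := by
  have e : {σ : ℤ → ℤ // IsBoundedAffinePerm n σ} ≃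
      Σ w : Perm (Fin n), {U : Finset (Fin n) //
        U ∈ Finset.powersetCard (aexF w).card (nfxF w)} :=
    (E1 hn).trans ((Equiv.subtypeProdEquivSigmaSubtype Cond).trans (Equiv.sigmaCongrRight E2))
  rw [Nat.card_congr e, Nat.card_eq_fintype_card, Fintype.card_sigma]
  refine Finset.sum_congr rfl fun w _ => ?_
  rw [show Fintype.card {U : Finset (Fin n) //
        U ∈ Finset.powersetCard (aexF w).card (nfxF w)}
      = (Finset.powersetCard (aexF w).card (nfxF w)).card from
    (Fintype.card_congr (Equiv.refl _)).trans (Fintype.card_coe _), Finset.card_powersetCard]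
  have hle : (aexF w).card ≤ (nfxF w).card := by have := nfx_card w; omega
  rw [← Nat.choose_symm hle]
  congr 1
  have := nfx_card w
  omega


/-! ### Stage 3: grouping by fixed point sets -/

lemma w_maps {w : Perm (Fin n)} {F : Finset (Fin n)} (hF : nfxF w = F) (x : Fin n) :
    x ∈ F ↔ w x ∈ F := by
  subst hF
  rw [mem_nfxF, mem_nfxF]
  constructor
  · intro h h2
    exact h (w.injective h2)
  · intro h h2
    exact h (by rw [h2, h2])

variable {m : ℕ}

noncomputable def extP (F : Finset (Fin n)) (hF : F.card = m) (δ : Perm (Fin m)) :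
    Perm (Fin n) :=
  δ.extendDomain (F.orderIsoOfFin hF).toEquiv

lemma extP_apply_mem (F : Finset (Fin n)) (hF : F.card = m) (δ : Perm (Fin m)) {x : Fin n}
    (hx : x ∈ F) :
    extP F hF δ x
      = ((F.orderIsoOfFin hF) (δ ((F.orderIsoOfFin hF).toEquiv.symm ⟨x, hx⟩)) : Fin n) :=
  Equiv.Perm.extendDomain_apply_subtype _ _ hx

lemma extP_apply_not_mem (F : Finset (Fin n)) (hF : F.card = m) (δ : Perm (Fin m)) {x : Fin n}
    (hx : x ∉ F) : extP F hF δ x = x :=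
  Equiv.Perm.extendDomain_apply_not_subtype _ _ hx

lemma extP_apply_image (F : Finset (Fin n)) (hF : F.card = m) (δ : Perm (Fin m)) (j : Fin m) :
    extP F hF δ ((F.orderIsoOfFin hF j : Fin n)) = ((F.orderIsoOfFin hF (δ j) : Fin n)) :=
  Equiv.Perm.extendDomain_apply_image _ _ _

lemma extP_nfx (F : Finset (Fin n)) (hF : F.card = m) (δ : Perm (Fin m))
    (hδ : ∀ j, δ j ≠ j) : nfxF (extP F hF δ) = F := by
  ext x
  rw [mem_nfxF]
  by_cases hx : x ∈ F
  · simp only [hx, iff_true]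
    rw [extP_apply_mem F hF δ hx]
    intro hcontra
    have h1 : (F.orderIsoOfFin hF) (δ ((F.orderIsoOfFin hF).toEquiv.symm ⟨x, hx⟩))
        = (F.orderIsoOfFin hF) ((F.orderIsoOfFin hF).toEquiv.symm ⟨x, hx⟩) := by
      apply Subtype.ext
      rw [hcontra]
      have : (F.orderIsoOfFin hF) ((F.orderIsoOfFin hF).toEquiv.symm ⟨x, hx⟩) = ⟨x, hx⟩ :=
        (F.orderIsoOfFin hF).toEquiv.apply_symm_apply ⟨x, hx⟩
      rw [this]
    exact hδ _ ((F.orderIsoOfFin hF).injective h1)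
  · simp only [hx, iff_false, not_not]
    exact extP_apply_not_mem F hF δ hx

lemma extP_exc (F : Finset (Fin n)) (hF : F.card = m) (δ : Perm (Fin m)) :
    excCount (extP F hF δ) = excCount δ := by
  unfold excCount
  refine (Finset.card_bij (fun j _ => ((F.orderIsoOfFin hF) j : Fin n)) ?_ ?_ ?_).symm
  · intro j hj
    rw [Finset.mem_filter] at hj ⊢
    refine ⟨Finset.mem_univ _, ?_⟩
    rw [extP_apply_image F hF δ j]
    exact Subtype.coe_lt_coe.mpr ((F.orderIsoOfFin hF).lt_iff_lt.mpr hj.2)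
  · intro a _ b _ hab
    exact (F.orderIsoOfFin hF).injective (Subtype.ext hab)
  · intro x hx
    rw [Finset.mem_filter] at hx
    have hxF : x ∈ F := by
      by_contra hxF
      rw [extP_apply_not_mem F hF δ hxF] at hx
      exact lt_irrefl x hx.2
    refine ⟨(F.orderIsoOfFin hF).toEquiv.symm ⟨x, hxF⟩, ?_, ?_⟩
    · rw [Finset.mem_filter]
      refine ⟨Finset.mem_univ _, ?_⟩
      have he : ((F.orderIsoOfFin hF) ((F.orderIsoOfFin hF).toEquiv.symm ⟨x, hxF⟩) : Fin n)
          = x :=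
        congrArg Subtype.val ((F.orderIsoOfFin hF).toEquiv.apply_symm_apply ⟨x, hxF⟩)
      have h2 := hx.2
      rw [extP_apply_mem F hF δ hxF] at h2
      rw [← (F.orderIsoOfFin hF).lt_iff_lt, ← Subtype.coe_lt_coe, he]
      exact h2
    · exact congrArg Subtype.val ((F.orderIsoOfFin hF).toEquiv.apply_symm_apply ⟨x, hxF⟩)

lemma extP_inj (F : Finset (Fin n)) (hF : F.card = m) :
    Function.Injective (extP F hF) := by
  intro a b hab
  apply Equiv.ext
  intro j
  have := congrArg (fun w : Perm (Fin n) => w ((F.orderIsoOfFin hF j : Fin n))) hab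
  simp only [extP_apply_image] at this
  exact (F.orderIsoOfFin hF).injective (Subtype.ext this)

lemma extP_surj (F : Finset (Fin n)) (hF : F.card = m) (w : Perm (Fin n))
    (hw : nfxF w = F) :
    ∃ δ : Perm (Fin m), (∀ j, δ j ≠ j) ∧ extP F hF δ = w := by
  have hmem : ∀ x : Fin n, w x ∈ F ↔ x ∈ F := fun x => (w_maps hw x).symm
  refine ⟨(F.orderIsoOfFin hF).toEquiv.permCongr.symm (w.subtypePerm hmem), ?_, ?_⟩
  · intro j hj
    have h1 : (F.orderIsoOfFin hF).toEquiv.symm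
        ((w.subtypePerm hmem) ((F.orderIsoOfFin hF).toEquiv j)) = j := hj
    have h2 := congrArg (F.orderIsoOfFin hF).toEquiv h1
    rw [Equiv.apply_symm_apply] at h2
    have h3 : w ((F.orderIsoOfFin hF j : Fin n)) = (F.orderIsoOfFin hF j : Fin n) :=
      congrArg Subtype.val h2
    have h4 : ((F.orderIsoOfFin hF j : Fin n)) ∈ nfxF w := by
      rw [hw]; exact (F.orderIsoOfFin hF j).2
    exact (mem_nfxF.mp h4) h3
  · apply Equiv.ext
    intro x
    by_cases hx : x ∈ F
    · rw [extP_apply_mem F hF _ hx]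
      have h1 : ((F.orderIsoOfFin hF).toEquiv.permCongr.symm (w.subtypePerm hmem))
          ((F.orderIsoOfFin hF).toEquiv.symm ⟨x, hx⟩)
          = (F.orderIsoOfFin hF).toEquiv.symm ((w.subtypePerm hmem) ⟨x, hx⟩) := by
        rw [Equiv.permCongr_symm, Equiv.permCongr_apply, Equiv.symm_symm,
          Equiv.apply_symm_apply]
      rw [h1]
      have h2 : (F.orderIsoOfFin hF) ((F.orderIsoOfFin hF).toEquiv.symm
          ((w.subtypePerm hmem) ⟨x, hx⟩)) = (w.subtypePerm hmem) ⟨x, hx⟩ :=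
        (F.orderIsoOfFin hF).toEquiv.apply_symm_apply _
      rw [h2]
      rfl
    · rw [extP_apply_not_mem F hF _ hx]
      have hfix : w x = x := by
        by_contra hne
        exact hx (hw ▸ mem_nfxF.mpr hne)
      exact hfix.symm

noncomputable def E3 (F : Finset (Fin n)) (hF : F.card = m) (k : ℕ) :
    {δ : Perm (Fin m) // (∀ i, δ i ≠ i) ∧ excCount δ = k} ≃
      {w : Perm (Fin n) // nfxF w = F ∧ excCount w = k} := by
  apply Equiv.ofBijective (fun δ => ⟨extP F hF δ.1,
    extP_nfx F hF δ.1 δ.2.1, by rw [extP_exc]; exact δ.2.2⟩)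
  constructor
  · intro a b hab
    exact Subtype.ext (extP_inj F hF (congrArg Subtype.val hab))
  · rintro ⟨w, hw1, hw2⟩
    obtain ⟨δ, hδ1, hδ2⟩ := extP_surj F hF w hw1
    refine ⟨⟨δ, hδ1, ?_⟩, Subtype.ext hδ2⟩
    have h5 := extP_exc F hF δ
    rw [hδ2] at h5
    omega

lemma fiber_card (F : Finset (Fin n)) (hF : F.card = m) (k : ℕ) :
    (Finset.univ.filter fun w : Perm (Fin n) => nfxF w = F ∧ excCount w = k).card
      = derangD m k := by
  have h1 : (Finset.univ.filter fun w : Perm (Fin n) => nfxF w = F ∧ excCount w = k).card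
      = Fintype.card {w : Perm (Fin n) // nfxF w = F ∧ excCount w = k} :=
    (Fintype.card_subtype _).symm
  rw [h1, ← Fintype.card_congr (E3 F hF k), derangD, Nat.card_eq_fintype_card]

lemma group_card (k : ℕ) :
    (Finset.univ.filter fun w : Perm (Fin n) => (nfxF w).card = m ∧ excCount w = k).card
      = n.choose m * derangD m k := by
  rw [Finset.card_eq_sum_card_fiberwise
    (f := nfxF) (t := Finset.powersetCard m Finset.univ)
    (fun w hw => Finset.mem_powersetCard.mpr
      ⟨Finset.subset_univ _, (Finset.mem_filter.mp hw).2.1⟩)]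
  have hstep : ∀ F ∈ Finset.powersetCard m (Finset.univ : Finset (Fin n)),
      ((Finset.univ.filter fun w : Perm (Fin n) =>
          (nfxF w).card = m ∧ excCount w = k).filter fun w => nfxF w = F).card
        = derangD m k := by
    intro F hFm
    have hF : F.card = m := (Finset.mem_powersetCard.mp hFm).2
    rw [Finset.filter_filter]
    have hpred : ∀ w : Perm (Fin n),
        (((nfxF w).card = m ∧ excCount w = k) ∧ nfxF w = F) ↔
          (nfxF w = F ∧ excCount w = k) := by
      intro w
      constructor
      · rintro ⟨⟨_, h2⟩, h3⟩; exact ⟨h3, h2⟩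
      · rintro ⟨h1, h2⟩; exact ⟨⟨by rw [h1, hF], h2⟩, h1⟩
    rw [Finset.filter_congr fun w _ => hpred w]
    exact fiber_card F hF k
  rw [Finset.sum_congr rfl hstep, Finset.sum_const, smul_eq_mul,
    Finset.card_powersetCard, Finset.card_univ, Fintype.card_fin]


/-! ### Stage 4: assembling the counts -/

lemma excCount_le (π : Perm (Fin m)) : excCount π ≤ m := by
  unfold excCount
  calc (Finset.univ.filter fun i => i < π i).card
      ≤ (Finset.univ : Finset (Fin m)).card := Finset.card_filter_le _ _
    _ = m := by simp

lemma nfx_card_le (w : Perm (Fin m)) : (nfxF w).card ≤ m := by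
  calc (nfxF w).card ≤ (Finset.univ : Finset (Fin m)).card := Finset.card_filter_le _ _
    _ = m := by simp

lemma derangD_eq_zero {k : ℕ} (h : m < k) : derangD m k = 0 := by
  rw [derangD]
  have : IsEmpty {π : Perm (Fin m) // (∀ i, π i ≠ i) ∧ excCount π = k} := by
    constructor; rintro ⟨π, _, h2⟩
    have := excCount_le π; omega
  exact Nat.card_of_isEmpty

lemma eulerianA_eq_zero {k : ℕ} (h : m < k) : eulerianA m k = 0 := by
  rw [eulerianA]
  have : IsEmpty {π : Perm (Fin m) // excCount π = k} := by
    constructor; rintro ⟨π, h2⟩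
    have := excCount_le π; omega
  exact Nat.card_of_isEmpty

lemma eulerian_sum (N k : ℕ) :
    eulerianA N k = ∑ m ∈ Finset.range (N + 1), N.choose m * derangD m k := by
  rw [eulerianA, Nat.card_eq_fintype_card, Fintype.card_subtype]
  rw [Finset.card_eq_sum_card_fiberwise
    (f := fun w : Perm (Fin N) => (nfxF w).card) (t := Finset.range (N + 1))
    (fun w _ => Finset.mem_range.mpr (show (nfxF w).card < N + 1 by have := nfx_card_le w; omega))]
  refine Finset.sum_congr rfl fun m hm => ?_
  rw [Finset.filter_filter]
  rw [Finset.filter_congr fun w _ =>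
    (and_comm : (excCount w = k ∧ (nfxF w).card = m) ↔ _)]
  exact group_card k

lemma part1 (hn : 0 < n) :
    Nat.card {σ : ℤ → ℤ // IsBoundedAffinePerm n σ} =
      ∑ m ∈ Finset.range (n + 1), n.choose m *
        ∑ k ∈ Finset.range (m + 1), m.choose k * derangD m k := by
  rw [cardA hn]
  rw [← Finset.sum_fiberwise_of_maps_to
    (g := fun w : Perm (Fin n) => ((nfxF w).card, excCount w))
    (t := (Finset.range (n + 1)) ×ˢ (Finset.range (n + 1)))
    (fun w _ => Finset.mem_product.mpr
      ⟨Finset.mem_range.mpr (show (nfxF w).card < n + 1 by have := nfx_card_le w; omega),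
        Finset.mem_range.mpr (show excCount w < n + 1 by have := excCount_le w; omega)⟩)
    (f := fun w => ((nfxF w).card).choose (excCount w))]
  rw [Finset.sum_product]
  refine Finset.sum_congr rfl fun m hm => ?_
  have hm' : m ≤ n := by rw [Finset.mem_range] at hm; omega
  have hstep : ∀ k ∈ Finset.range (n + 1),
      (∑ w ∈ Finset.univ.filter (fun w : Perm (Fin n) =>
          ((nfxF w).card, excCount w) = (m, k)), ((nfxF w).card).choose (excCount w))
        = n.choose m * derangD m k * m.choose k := by
    intro k _
    rw [Finset.filter_congr fun w _ =>
      (by rw [Prod.ext_iff] :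
        (((nfxF w).card, excCount w) = (m, k)) ↔ ((nfxF w).card = m ∧ excCount w = k))]
    have hcst : ∀ w ∈ Finset.univ.filter (fun w : Perm (Fin n) =>
        (nfxF w).card = m ∧ excCount w = k),
        ((nfxF w).card).choose (excCount w) = m.choose k := by
      intro w hw
      obtain ⟨h1, h2⟩ := (Finset.mem_filter.mp hw).2
      rw [h1, h2]
    rw [Finset.sum_congr rfl hcst, Finset.sum_const, smul_eq_mul, group_card k]
  rw [Finset.sum_congr rfl hstep, Finset.mul_sum]
  have hvan : ∀ k ∈ Finset.range (n + 1), k ∉ Finset.range (m + 1) →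
      n.choose m * derangD m k * m.choose k = 0 := by
    intro k hk hk'
    have hmk : m < k := by rw [Finset.mem_range, not_lt] at hk'; omega
    rw [derangD_eq_zero hmk]
    ring
  rw [← Finset.sum_subset (Finset.range_subset_range.mpr (by omega : m + 1 ≤ n + 1)) hvan]
  exact Finset.sum_congr rfl fun k _ => by ring

lemma findiff (p q j : ℕ) :
    ∑ s ∈ Finset.range (p + 1),
        (-1 : ℤ) ^ (p - s) * (p.choose s : ℤ) * (((j + s).choose q : ℕ) : ℤ)
      = if p ≤ q then ((j.choose (q - p) : ℕ) : ℤ) else 0 := by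
  have h := fwdDiff_iter_eq_sum_shift (1 : ℕ) (fun x => ((x.choose q : ℕ) : ℤ)) p j
  simp only [smul_eq_mul, nsmul_eq_mul, mul_one] at h
  have hsum : ∑ s ∈ Finset.range (p + 1),
      (-1 : ℤ) ^ (p - s) * (p.choose s : ℤ) * (((j + s).choose q : ℕ) : ℤ)
      = (fwdDiff (1:ℕ))^[p] (fun x => ((x.choose q : ℕ) : ℤ)) j := by
    rw [h]
  rw [hsum]
  split_ifs with hpq
  · obtain ⟨d, rfl⟩ := Nat.exists_eq_add_of_le hpq
    have hiter := fwdDiff_iter_choose d p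
    have : (fwdDiff (1:ℕ))^[p] (fun x => ((x.choose (p + d) : ℕ) : ℤ)) j
        = ((j.choose d : ℕ) : ℤ) := by rw [hiter]
    rw [this]
    have hd : p + d - p = d := by omega
    rw [hd]
  · have hqp : q < p := by omega
    have hsplit : p = (p - q) + q := by omega
    rw [hsplit, Function.iterate_add_apply]
    have h1 : (fwdDiff (1:ℕ))^[q] (fun x => ((x.choose q : ℕ) : ℤ)) = fun _ => (1 : ℤ) := by
      have := fwdDiff_iter_choose 0 q
      simp only [Nat.add_zero] at this
      rw [this]
      funext x
      simp
    rw [h1]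
    obtain ⟨e, he⟩ : ∃ e, p - q = e + 1 := ⟨p - q - 1, by omega⟩
    rw [he, Function.iterate_succ_apply]
    have h2 : fwdDiff (1:ℕ) (fun _ => (1 : ℤ) : ℕ → ℤ) = fun _ => (0 : ℤ) := fwdDiff_const _ _
    rw [h2, fwdDiff_iter_eq_sum_shift]
    simp

lemma dagger {n : ℕ} (j k : ℕ) (hj : j ≤ n) (hk : k ≤ n) :
    ∑ m ∈ Finset.range (n + 1),
        (-1 : ℤ) ^ (n - m) * (n.choose m : ℤ) * (m.choose (n - k) : ℤ) * (m.choose j : ℤ)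
      = (n.choose j : ℤ) * (j.choose k : ℤ) := by
  have h0 : ∀ m ∈ Finset.range (n + 1), m ∉ Finset.Ico j (n + 1) →
      (-1 : ℤ) ^ (n - m) * (n.choose m : ℤ) * (m.choose (n - k) : ℤ) * (m.choose j : ℤ)
        = 0 := by
    intro m hm hm'
    rw [Finset.mem_range] at hm
    have hmj : m < j := by
      rw [Finset.mem_Ico, not_and_or, not_le, not_lt] at hm'
      rcases hm' with h | h <;> omega
    rw [Nat.choose_eq_zero_of_lt hmj]
    push_cast
    ring
  rw [← Finset.sum_subset
    (by intro x hx; rw [Finset.mem_Ico] at hx; rw [Finset.mem_range]; omega :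
      Finset.Ico j (n + 1) ⊆ Finset.range (n + 1)) h0]
  rw [Finset.sum_Ico_eq_sum_range]
  have hps : n + 1 - j = (n - j) + 1 := by omega
  rw [hps]
  have hterm : ∀ s ∈ Finset.range ((n - j) + 1),
      (-1 : ℤ) ^ (n - (j + s)) * (n.choose (j + s) : ℤ)
          * ((j + s).choose (n - k) : ℤ) * ((j + s).choose j : ℤ)
        = (n.choose j : ℤ) * ((-1 : ℤ) ^ ((n - j) - s) * ((n - j).choose s : ℤ)
            * (((j + s).choose (n - k) : ℕ) : ℤ)) := by
    intro s hs
    have hs' : s ≤ n - j := by rw [Finset.mem_range] at hs; omega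
    have hmn : j + s ≤ n := by omega
    have hcc : (n.choose (j + s)) * ((j + s).choose j)
        = n.choose j * ((n - j).choose s) := by
      have hx := Nat.choose_mul (n := n) (k := j + s) (s := j) (Nat.le_add_right j s)
      rwa [Nat.add_sub_cancel_left] at hx
    have hsign : n - (j + s) = (n - j) - s := by omega
    have hcc' : ((n.choose (j + s)) : ℤ) * ((j + s).choose j : ℤ)
        = (n.choose j : ℤ) * ((n - j).choose s : ℤ) := by exact_mod_cast hcc
    rw [hsign]
    linear_combination ((-1 : ℤ) ^ ((n - j) - s) * (((j + s).choose (n - k) : ℕ) : ℤ)) * hcc'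
  rw [Finset.sum_congr rfl hterm, ← Finset.mul_sum, findiff (n - j) (n - k) j]
  by_cases hkj : k ≤ j
  · rw [if_pos (by omega : n - j ≤ n - k)]
    have hd : (n - k) - (n - j) = j - k := by omega
    rw [hd, Nat.choose_symm hkj]
  · rw [if_neg (by omega), mul_zero, Nat.choose_eq_zero_of_lt (by omega : j < k)]
    simp

lemma sum3_comm {α : Type*} [AddCommMonoid α] (R S T : Finset ℕ) (f : ℕ → ℕ → ℕ → α) :
    ∑ m ∈ R, ∑ k ∈ S, ∑ j ∈ T, f m k j = ∑ j ∈ T, ∑ k ∈ S, ∑ m ∈ R, f m k j :=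
  calc ∑ m ∈ R, ∑ k ∈ S, ∑ j ∈ T, f m k j
      = ∑ k ∈ S, ∑ m ∈ R, ∑ j ∈ T, f m k j := Finset.sum_comm
    _ = ∑ k ∈ S, ∑ j ∈ T, ∑ m ∈ R, f m k j :=
        Finset.sum_congr rfl fun k _ => Finset.sum_comm
    _ = ∑ j ∈ T, ∑ k ∈ S, ∑ m ∈ R, f m k j := Finset.sum_comm

lemma keysum (n : ℕ) (D : ℕ → ℕ → ℤ) :
    ∑ m ∈ Finset.range (n + 1), (n.choose m : ℤ) *
        ∑ k ∈ Finset.range (n + 1), (m.choose (n - k) : ℤ) * (-1 : ℤ) ^ (n - m) *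
          (∑ j ∈ Finset.range (n + 1), (m.choose j : ℤ) * D j k)
      = ∑ m ∈ Finset.range (n + 1), (n.choose m : ℤ) *
          ∑ k ∈ Finset.range (n + 1), (m.choose k : ℤ) * D m k := by
  calc
    ∑ m ∈ Finset.range (n + 1), (n.choose m : ℤ) *
        ∑ k ∈ Finset.range (n + 1), (m.choose (n - k) : ℤ) * (-1 : ℤ) ^ (n - m) *
          (∑ j ∈ Finset.range (n + 1), (m.choose j : ℤ) * D j k)
      = ∑ m ∈ Finset.range (n + 1), ∑ k ∈ Finset.range (n + 1), ∑ j ∈ Finset.range (n + 1),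
          (-1 : ℤ) ^ (n - m) * (n.choose m : ℤ) * (m.choose (n - k) : ℤ) * (m.choose j : ℤ)
            * D j k := by
        refine Finset.sum_congr rfl fun m _ => ?_
        rw [Finset.mul_sum]
        refine Finset.sum_congr rfl fun k _ => ?_
        rw [Finset.mul_sum, Finset.mul_sum]
        exact Finset.sum_congr rfl fun j _ => by ring
    _ = ∑ j ∈ Finset.range (n + 1), ∑ k ∈ Finset.range (n + 1), ∑ m ∈ Finset.range (n + 1),
          (-1 : ℤ) ^ (n - m) * (n.choose m : ℤ) * (m.choose (n - k) : ℤ) * (m.choose j : ℤ)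
            * D j k := sum3_comm _ _ _ _
    _ = ∑ j ∈ Finset.range (n + 1), ∑ k ∈ Finset.range (n + 1),
          ((n.choose j : ℤ) * (j.choose k : ℤ)) * D j k := by
        refine Finset.sum_congr rfl fun j hj => Finset.sum_congr rfl fun k hk => ?_
        rw [← Finset.sum_mul]
        have hj' : j ≤ n := by rw [Finset.mem_range] at hj; omega
        have hk' : k ≤ n := by rw [Finset.mem_range] at hk; omega
        rw [dagger j k hj' hk']
    _ = ∑ m ∈ Finset.range (n + 1), (n.choose m : ℤ) *
          ∑ k ∈ Finset.range (n + 1), (m.choose k : ℤ) * D m k := by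
        refine Finset.sum_congr rfl fun j _ => ?_
        rw [Finset.mul_sum]
        exact Finset.sum_congr rfl fun k _ => by ring

lemma part2 (n : ℕ) :
    ∑ m ∈ Finset.range (n + 1), (n.choose m : ℤ) *
        ∑ k ∈ Finset.range (m + 1),
          (m.choose (n - k) : ℤ) * (-1 : ℤ) ^ (n - m) * (eulerianA m k : ℤ)
      = ∑ m ∈ Finset.range (n + 1), (n.choose m : ℤ) *
          ∑ k ∈ Finset.range (m + 1), (m.choose k : ℤ) * (derangD m k : ℤ) := by
  have hA : ∀ m, m ≤ n → ∀ k, (eulerianA m k : ℤ)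
      = ∑ j ∈ Finset.range (n + 1), (m.choose j : ℤ) * (derangD j k : ℤ) := by
    intro m hm k
    rw [eulerian_sum m k]
    push_cast
    refine Finset.sum_subset (Finset.range_subset_range.mpr (by omega)) ?_
    intro j _ hj'
    have hlt : m < j := by rw [Finset.mem_range, not_lt] at hj'; omega
    rw [Nat.choose_eq_zero_of_lt hlt]
    push_cast
    ring
  have hL : ∀ m, m ≤ n →
      ∑ k ∈ Finset.range (m + 1),
          (m.choose (n - k) : ℤ) * (-1 : ℤ) ^ (n - m) * (eulerianA m k : ℤ)
        = ∑ k ∈ Finset.range (n + 1),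
            (m.choose (n - k) : ℤ) * (-1 : ℤ) ^ (n - m) * (eulerianA m k : ℤ) := by
    intro m hm
    refine Finset.sum_subset (Finset.range_subset_range.mpr (by omega)) ?_
    intro k _ hk'
    have hlt : m < k := by rw [Finset.mem_range, not_lt] at hk'; omega
    rw [eulerianA_eq_zero hlt]
    push_cast
    ring
  have hR : ∀ m, m ≤ n →
      ∑ k ∈ Finset.range (m + 1), (m.choose k : ℤ) * (derangD m k : ℤ)
        = ∑ k ∈ Finset.range (n + 1), (m.choose k : ℤ) * (derangD m k : ℤ) := by
    intro m hm
    refine Finset.sum_subset (Finset.range_subset_range.mpr (by omega)) ?_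
    intro k _ hk'
    have hlt : m < k := by rw [Finset.mem_range, not_lt] at hk'; omega
    rw [derangD_eq_zero hlt]
    push_cast
    ring
  calc
    ∑ m ∈ Finset.range (n + 1), (n.choose m : ℤ) *
        ∑ k ∈ Finset.range (m + 1),
          (m.choose (n - k) : ℤ) * (-1 : ℤ) ^ (n - m) * (eulerianA m k : ℤ)
      = ∑ m ∈ Finset.range (n + 1), (n.choose m : ℤ) *
          ∑ k ∈ Finset.range (n + 1), (m.choose (n - k) : ℤ) * (-1 : ℤ) ^ (n - m) *
            (∑ j ∈ Finset.range (n + 1), (m.choose j : ℤ) * (derangD j k : ℤ)) := by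
        refine Finset.sum_congr rfl fun m hm => ?_
        have hm' : m ≤ n := by rw [Finset.mem_range] at hm; omega
        rw [hL m hm']
        refine congrArg _ (Finset.sum_congr rfl fun k _ => ?_)
        rw [hA m hm' k]
    _ = ∑ m ∈ Finset.range (n + 1), (n.choose m : ℤ) *
          ∑ k ∈ Finset.range (n + 1), (m.choose k : ℤ) * (derangD m k : ℤ) :=
        keysum n (fun j k => (derangD j k : ℤ))
    _ = ∑ m ∈ Finset.range (n + 1), (n.choose m : ℤ) *
          ∑ k ∈ Finset.range (m + 1), (m.choose k : ℤ) * (derangD m k : ℤ) := by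
        refine Finset.sum_congr rfl fun m hm => ?_
        have hm' : m ≤ n := by rw [Finset.mem_range] at hm; omega
        rw [hR m hm']

end S17


/-- exact enumeration of bounded affine permutations:
`|S̃//ₙ| = ∑_{m=0}^n C(n,m) ∑_{k=0}^m C(m,k) d(m,k)`
`       = ∑_{m=0}^n C(n,m) ∑_{k=0}^m C(m,n−k) (−1)^{n−m} a(m,k)`. -/
theorem stmt17 (n : ℕ) (hn : 1 ≤ n) :
    Nat.card {σ : ℤ → ℤ // IsBoundedAffinePerm n σ} =
      (∑ m ∈ Finset.range (n + 1), Nat.choose n m *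
        ∑ k ∈ Finset.range (m + 1), Nat.choose m k * derangD m k) ∧
    (Nat.card {σ : ℤ → ℤ // IsBoundedAffinePerm n σ} : ℤ) =
      ∑ m ∈ Finset.range (n + 1), (Nat.choose n m : ℤ) *
        ∑ k ∈ Finset.range (m + 1),
          (Nat.choose m (n - k) : ℤ) * (-1 : ℤ) ^ (n - m) * eulerianA m k := by
  have h1 := S17.part1 (n := n) (by omega)
  refine ⟨h1, ?_⟩
  rw [h1]
  push_cast
  exact (S17.part2 n).symm
end

section
/- For all n ≥ 0 and 0 ≤ k ≤ n, d(n,k) = d(n, n−k); that is, the number of derangements of size n with exactly k excedances equals the number of derangements of size n with exactly n−k excedances. -/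
lemma excCount_inv {n : ℕ} (π : Equiv.Perm (Fin n)) (hd : ∀ i, π i ≠ i) :
    excCount π + excCount π⁻¹ = n := by
  have h1 : excCount π⁻¹ = (Finset.univ.filter fun j : Fin n => π j < j).card := by
    unfold excCount
    apply Finset.card_bij (fun i _ => π⁻¹ i)
    · intro a ha
      simp only [Finset.mem_filter, Finset.mem_univ, true_and] at ha ⊢
      simpa using ha
    · intro a ha b hb h
      exact π⁻¹.injective h
    · intro b hb
      simp only [Finset.mem_filter, Finset.mem_univ, true_and] at hb ⊢
      exact ⟨π b, by simpa using hb, by simp⟩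
  rw [h1]
  unfold excCount
  have h2 : (Finset.univ.filter fun i : Fin n => ¬ i < π i)
      = Finset.univ.filter fun i : Fin n => π i < i := by
    apply Finset.filter_congr
    intro i _
    constructor
    · intro h; exact lt_of_le_of_ne (not_lt.mp h) (hd i)
    · intro h; exact not_lt.mpr (le_of_lt h)
  have h3 := Finset.card_filter_add_card_filter_not (s := (Finset.univ : Finset (Fin n)))
    (p := fun i : Fin n => i < π i)
  rw [h2, Finset.card_univ, Fintype.card_fin] at h3
  exact h3

/-- the derangement Eulerian numbers are symmetric: `d(n,k) = d(n,n−k)`. -/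
theorem stmt18 (n k : ℕ) (hk : k ≤ n) : derangD n k = derangD n (n - k) := by
  have key : ∀ (π : Equiv.Perm (Fin n)), (∀ i, π i ≠ i) →
      (∀ i, π⁻¹ i ≠ i) ∧ excCount π + excCount π⁻¹ = n := by
    intro π hd
    refine ⟨fun i h => hd i ?_, excCount_inv π hd⟩
    conv_lhs => rw [← h]
    simp
  unfold derangD
  apply Nat.card_congr
  refine ⟨fun p => ⟨p.1⁻¹, (key p.1 p.2.1).1, ?_⟩,
          fun p => ⟨p.1⁻¹, (key p.1 p.2.1).1, ?_⟩, ?_, ?_⟩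
  · have h := (key p.1 p.2.1).2; have h2 := p.2.2; omega
  · have h := (key p.1 p.2.1).2; have h2 := p.2.2; omega
  · intro p; exact Subtype.ext (by simp)
  · intro p; exact Subtype.ext (by simp)
end
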